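/- Let n ≥ 1, N ≥ 1, and let E be the set of all n×N matrices M with entries in {0,1} such that every column of M has column sum equal to n−1 or n. Then E is a fooling set for the columnwise extension of the n-variable AND function (AND of a column equals 1 iff all n entries are 1), and |E| = (n+1)^N. -/

import Mathlib

/-- Replace the `i`-th row of the matrix `M1` by the `i`-th row of `M2`. -/
def replaceRow {n N : ℕ} {α : Type*} (M1 M2 : Fin n → Fin N → α) (i : Fin n) :
    Fin n → Fin N → α :=
  fun r => if r = i then M2 r else M1 r

/-- The columnwise extension `g^N` of a function `g` on columns:
apply `g` to each of the `N` columns of the matrix `M`. -/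
def colApply {n N : ℕ} {α β : Type*} (g : (Fin n → α) → β) (M : Fin n → Fin N → α) :
    Fin N → β :=
  fun j => g (fun i => M i j)

/-- `E` is a fooling set for the columnwise extension `g^N` of `g`: for all distinct
`M1, M2 ∈ E`, either `g^N(M1) ≠ g^N(M2)`, or replacing some row of `M1` by the
corresponding row of `M2` (or vice versa) changes the `g^N`-value. -/
def IsFoolingSet {n N : ℕ} {α β : Type*} (g : (Fin n → α) → β)
    (E : Set (Fin n → Fin N → α)) : Prop :=
  ∀ M1 ∈ E, ∀ M2 ∈ E, M1 ≠ M2 →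
    colApply g M1 ≠ colApply g M2 ∨
    (∃ i, colApply g (replaceRow M1 M2 i) ≠ colApply g M1) ∨
    (∃ i, colApply g (replaceRow M2 M1 i) ≠ colApply g M2)

/-- Column lemma: entries ≤ 1, sum is n-1 or n, and one entry is 0 → all other entries 1. -/
lemma col_lemma {n : ℕ} (c : Fin n → ℕ) (hle : ∀ i, c i ≤ 1)
    (hs : ∑ i, c i = n - 1 ∨ ∑ i, c i = n) (a : Fin n) (ha : c a = 0) :
    ∀ b, b ≠ a → c b = 1 := by
  have hsplit : ∑ i, c i = ∑ i ∈ Finset.univ.erase a, c i := by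
    rw [← Finset.add_sum_erase _ c (Finset.mem_univ a), ha, zero_add]
  have hcard : (Finset.univ.erase a).card = n - 1 := by
    simp [Finset.card_erase_of_mem]
  have hub : ∑ i ∈ Finset.univ.erase a, c i ≤ n - 1 := by
    calc ∑ i ∈ Finset.univ.erase a, c i ≤ ∑ _i ∈ Finset.univ.erase a, 1 :=
          Finset.sum_le_sum (fun i _ => hle i)
      _ = n - 1 := by simp [hcard]
  have hsum : ∑ i ∈ Finset.univ.erase a, c i = n - 1 := by
    rcases hs with h | h
    · omega
    · omega
  have := (Finset.sum_eq_sum_iff_of_le (s := Finset.univ.erase a)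
      (f := c) (g := fun _ => 1) (fun i _ => hle i)).mp (by simp [hsum, hcard])
  intro b hb
  exact this b (Finset.mem_erase.mpr ⟨hb, Finset.mem_univ b⟩)

lemma not_all_one {n : ℕ} (c : Fin n → ℕ) (hle : ∀ i, c i ≤ 1)
    (h : ¬ ∀ i, c i = 1) : ∃ a, c a = 0 := by
  push_neg at h
  obtain ⟨a, ha⟩ := h
  exact ⟨a, by have := hle a; omega⟩

/-- The set of Boolean (0/1-entry) `n × N` matrices all of whose columns sum to
`n - 1` or `n` is a fooling set for the columnwise extension of the `n`-variable
AND function, and has cardinality `(n+1)^N`. -/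
theorem stmt_9 (n N : ℕ) (hn : 1 ≤ n) (hN : 1 ≤ N) :
    IsFoolingSet (fun x : Fin n → ℕ => if ∀ i, x i = 1 then 1 else 0)
      {M : Fin n → Fin N → ℕ | (∀ i j, M i j ≤ 1) ∧
        ∀ j, (∑ i, M i j = n - 1 ∨ ∑ i, M i j = n)} ∧
    Set.ncard {M : Fin n → Fin N → ℕ | (∀ i j, M i j ≤ 1) ∧
        ∀ j, (∑ i, M i j = n - 1 ∨ ∑ i, M i j = n)} = (n + 1) ^ N := by
  set E := {M : Fin n → Fin N → ℕ | (∀ i j, M i j ≤ 1) ∧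
        ∀ j, (∑ i, M i j = n - 1 ∨ ∑ i, M i j = n)} with hE
  constructor
  · -- fooling set
    intro M1 hM1 M2 hM2 hne
    obtain ⟨hle1, hs1⟩ := hM1
    obtain ⟨hle2, hs2⟩ := hM2
    by_cases hg : colApply (fun x : Fin n → ℕ => if ∀ i, x i = 1 then 1 else 0) M1 =
        colApply (fun x : Fin n → ℕ => if ∀ i, x i = 1 then 1 else 0) M2
    swap
    · exact Or.inl hg
    right
    -- find a differing entry
    have : ∃ i j, M1 i j ≠ M2 i j := by
      by_contra h
      push_neg at h
      exact hne (funext fun i => funext fun j => h i j)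
    obtain ⟨i, j, hij⟩ := this
    have hgj := congrFun hg j
    simp only [colApply] at hgj
    -- neither column all ones
    have hno1 : ¬ ∀ r, M1 r j = 1 := by
      intro h1
      by_cases h2 : ∀ r, M2 r j = 1
      · exact hij (by rw [h1 i, h2 i])
      · simp [h1, h2] at hgj
    have hno2 : ¬ ∀ r, M2 r j = 1 := by
      intro h2
      simp [hno1, h2] at hgj
    obtain ⟨a, haz⟩ := not_all_one _ (fun r => hle1 r j) hno1
    obtain ⟨b, hbz⟩ := not_all_one _ (fun r => hle2 r j) hno2
    have h1rest := col_lemma _ (fun r => hle1 r j) (hs1 j) a haz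
    have h2rest := col_lemma _ (fun r => hle2 r j) (hs2 j) b hbz
    have hab : a ≠ b := by
      rintro rfl
      apply hij
      by_cases hia : i = a
      · rw [hia, haz, hbz]
      · rw [h1rest i hia, h2rest i hia]
    -- replace row b of M2 by row b of M1: column j becomes all ones
    right
    refine ⟨b, fun h => ?_⟩
    have hj := congrFun h j
    simp only [colApply, replaceRow] at hj
    have hall : ∀ r, (if r = b then M1 r else M2 r) j = 1 := by
      intro r
      by_cases hr : r = b
      · simp [hr, h1rest b (Ne.symm hab)]
      · simp [hr, h2rest r hr]
    replace hj : (1 : ℕ) = 0 := by simpa [hall, hno2] using hj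
    exact Nat.one_ne_zero hj
  · -- cardinality
    classical
    set f : (Fin N → Option (Fin n)) → (Fin n → Fin N → ℕ) :=
      fun c i j => if c j = some i then 0 else 1 with hf
    have hfinj : Function.Injective f := by
      intro c c' hcc
      funext j
      match hc : c j, hc' : c' j with
      | none, none => rfl
      | none, some a =>
          have := congrFun (congrFun hcc a) j
          simp [hf, hc, hc'] at this
      | some a, none =>
          have := congrFun (congrFun hcc a) j
          simp [hf, hc, hc'] at this
      | some a, some a' =>
          have := congrFun (congrFun hcc a) j
          simp [hf, hc, hc'] at this
          have haa : a' = a := by by_contra hne; simp [hne] at this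
          rw [haa]
    have hrange : E = Set.range f := by
      ext M
      constructor
      · rintro ⟨hle, hs⟩
        refine ⟨fun j => if h : ∃ a, M a j = 0 then some h.choose else none, ?_⟩
        funext i j
        by_cases h : ∃ a, M a j = 0
        · have hz := h.choose_spec
          have hrest := col_lemma _ (fun r => hle r j) (hs j) h.choose hz
          by_cases hi : h.choose = i
          · subst hi
            simp [hf, h, hz]
          · simp [hf, h, hi, hrest i (fun he => hi he.symm)]
        · push_neg at h
          have : ∀ r, M r j = 1 := fun r => by have := hle r j; have := h r; omega
          simp [hf, h, this i]
      · rintro ⟨c, rfl⟩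
        refine ⟨fun i j => by simp [hf]; split <;> omega, fun j => ?_⟩
        match hc : c j with
        | none =>
            right
            simp [hf, hc]
        | some a =>
            left
            have : ∑ i, (f c) i j = ∑ i ∈ Finset.univ.erase a, 1 := by
              rw [← Finset.add_sum_erase _ _ (Finset.mem_univ a)]
              have h0 : (f c) a j = 0 := by simp [hf, hc]
              rw [h0, zero_add]
              refine Finset.sum_congr rfl fun x hx => ?_
              have hxa : x ≠ a := (Finset.mem_erase.mp hx).1
              simp [hf, hc, Ne.symm hxa]
            rw [this]
            simp [Finset.card_erase_of_mem]
    rw [hrange, Set.ncard_eq_toFinset_card']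
    rw [Set.toFinset_range]
    rw [Finset.card_image_of_injective _ hfinj]
    simp
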